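/- Let Ω > 0, μ > 0, θ ∈ ℝ, ϑ = θ + √(π/2)/μ and ϱ = θ − √(π/2)/μ, and assume ϱ ≥ 0. Let f(x) = (1/Ω)·exp(−x/Ω) be the exponential density with mean Ω (the Nakagami-m density with m = 1, i.e. Rayleigh fading of the envelope). Then ∫₀^ϱ f(x) dx + ∫_ϱ^ϑ (1/2 − (μ/√(2π))·(x − θ)) · f(x) dx = 1 + (μ·Ω/√(2π)) · ( exp(−ϑ/Ω) − exp(−ϱ/Ω) ). -/

import Mathlib

open MeasureTheory Real

/-- Corollary to Proposition 1: for `m = 1` (Rayleigh fading of the envelope, exponential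
instantaneous SNR) the closed-form outage probability reduces to the known Rayleigh form. -/
theorem outage_rayleigh_closed_form
    (Ω μ θ ϑ ϱ : ℝ) (hΩ : 0 < Ω) (hμ : 0 < μ)
    (hϑ : ϑ = θ + Real.sqrt (π / 2) / μ) (hϱ : ϱ = θ - Real.sqrt (π / 2) / μ)
    (hϱ0 : 0 ≤ ϱ)
    (f : ℝ → ℝ) (hf : ∀ x, f x = 1 / Ω * Real.exp (-x / Ω)) :
    (∫ x in (0:ℝ)..ϱ, f x)
      + (∫ x in ϱ..ϑ, (1 / 2 - μ / Real.sqrt (2 * π) * (x - θ)) * f x)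
    = 1 + μ * Ω / Real.sqrt (2 * π) * (Real.exp (-ϑ / Ω) - Real.exp (-ϱ / Ω)) := by
  have hΩ0 : Ω ≠ 0 := hΩ.ne'
  set c : ℝ := μ / Real.sqrt (2 * π) with hc
  have hπ2 : (0:ℝ) < Real.sqrt (π / 2) := Real.sqrt_pos.mpr (by positivity)
  have hs : Real.sqrt (2 * π) = 2 * Real.sqrt (π / 2) := by
    have h4 : (2 * π) = (2:ℝ)^2 * (π / 2) := by ring
    rw [h4, Real.sqrt_mul (by positivity), Real.sqrt_sq (by norm_num)]
  have hkey : c * (Real.sqrt (π / 2) / μ) = 1 / 2 := by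
    rw [hc, hs]
    field_simp
  -- derivative of exp(-x/Ω)
  have hexp : ∀ x : ℝ, HasDerivAt (fun x => Real.exp (-x / Ω))
      (Real.exp (-x / Ω) * (-1 / Ω)) x := by
    intro x
    exact (Real.hasDerivAt_exp _).comp x (((hasDerivAt_id x).neg).div_const Ω)
  have hcont : Continuous (fun x : ℝ => Real.exp (-x / Ω)) := by
    continuity
  -- first integral
  have hI1 : (∫ x in (0:ℝ)..ϱ, f x) = 1 - Real.exp (-ϱ / Ω) := by
    have h1 : ∀ x ∈ Set.uIcc (0:ℝ) ϱ,
        HasDerivAt (fun x => -Real.exp (-x / Ω)) (f x) x := by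
      intro x _
      have := (hexp x).neg
      convert this using 1
      · rfl
      · rfl
      · rfl
      rw [hf x]; field_simp
    have h2 : IntervalIntegrable f volume 0 ϱ := by
      apply Continuous.intervalIntegrable
      have : Continuous fun x : ℝ => 1 / Ω * Real.exp (-x / Ω) := by continuity
      simpa [funext hf] using this
    rw [intervalIntegral.integral_eq_sub_of_hasDerivAt h1 h2]
    simp [Real.exp_zero]
    ring
  -- second integral
  set b : ℝ := c * Ω - (1 / 2 + c * θ) with hb
  have hI2 : (∫ x in ϱ..ϑ, (1 / 2 - μ / Real.sqrt (2 * π) * (x - θ)) * f x)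
      = (c * ϑ + b) * Real.exp (-ϑ / Ω) - (c * ϱ + b) * Real.exp (-ϱ / Ω) := by
    have h1 : ∀ x ∈ Set.uIcc ϱ ϑ,
        HasDerivAt (fun x => (c * x + b) * Real.exp (-x / Ω))
          ((1 / 2 - μ / Real.sqrt (2 * π) * (x - θ)) * f x) x := by
      intro x _
      have hl : HasDerivAt (fun x : ℝ => c * x + b) c x := by
        simpa using ((hasDerivAt_id x).const_mul c).add_const b
      have := hl.mul (hexp x)
      convert this using 1
      · rfl
      · rfl
      · rfl
      rw [hf x, ← hc]
      field_simp
      ring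
    have h2 : IntervalIntegrable
        (fun x => (1 / 2 - μ / Real.sqrt (2 * π) * (x - θ)) * f x) volume ϱ ϑ := by
      apply Continuous.intervalIntegrable
      have : Continuous fun x : ℝ =>
          (1 / 2 - μ / Real.sqrt (2 * π) * (x - θ)) * (1 / Ω * Real.exp (-x / Ω)) := by
        continuity
      simpa [funext hf] using this
    rw [intervalIntegral.integral_eq_sub_of_hasDerivAt h1 h2]
  rw [hI1, hI2]
  have hϑb : c * ϑ + b = c * Ω := by
    rw [hϑ, hb]
    have : c * (θ + Real.sqrt (π / 2) / μ) = c * θ + 1 / 2 := by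
      rw [mul_add, hkey]
    rw [this]; ring
  have hϱb : c * ϱ + b = c * Ω - 1 := by
    rw [hϱ, hb]
    have : c * (θ - Real.sqrt (π / 2) / μ) = c * θ - 1 / 2 := by
      rw [mul_sub, hkey]
    rw [this]; ring
  rw [hϑb, hϱb, hc]
  ring
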